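/- Let p ≥ 2 and let α_1, …, α_p, β_1, …, β_{p−1} ∈ ℂ[[y]] be such that f = ∏_{i=1}^p (X − α_i) ∈ ℂ[[y]][X] has derivative (with respect to X) equal to p · ∏_{j=1}^{p−1} (X − β_j). Let j ∈ {1,…,p−1} be such that β_j is not equal to any α_i. Then h := max_{i} O(α_i, β_j) is a (finite) natural number; choose k attaining this maximum and set S = {i : O(α_i, α_k) ≥ h}, F(z) = ∏_{i∈S} (z − coeff_h(α_i)), q = Σ_{i=1}^p min(h, O(α_k, α_i)), b = coeff_h(β_j), and C = ∏_{i∉S} coeff_{d_i}(α_k − α_i) with d_i = O(α_k, α_i). Then F'(b) = 0, F(b) ≠ 0, and the power series ∏_{i=1}^p (β_j − α_i) has order exactly q, with coefficient at y^q equal to C · F(b). -/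

import Mathlib

open PowerSeries

lemma myOrderNeg (φ : PowerSeries ℂ) : (-φ).order = φ.order := by
  apply le_antisymm
  · refine PowerSeries.le_order _ _ fun i hi => ?_
    have := PowerSeries.coeff_of_lt_order i hi
    rw [map_neg, neg_eq_zero] at this
    exact this
  · refine PowerSeries.le_order _ _ fun i hi => ?_
    have := PowerSeries.coeff_of_lt_order i hi
    rw [map_neg, this, neg_zero]

lemma myAux {ι : Type*} [DecidableEq ι] (s : Finset ι) (φ : ι → PowerSeries ℂ) (m : ι → ℕ)
    (hm : ∀ i, ∀ n < m i, PowerSeries.coeff n (φ i) = 0) :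
    (∀ n < ∑ i ∈ s, m i, PowerSeries.coeff n (∏ i ∈ s, φ i) = 0) ∧
      PowerSeries.coeff (∑ i ∈ s, m i) (∏ i ∈ s, φ i)
        = ∏ i ∈ s, PowerSeries.coeff (m i) (φ i) := by
  have hdvd : ∀ i, (X : PowerSeries ℂ) ^ m i ∣ φ i := fun i =>
    PowerSeries.X_pow_dvd_iff.2 (hm i)
  choose ψ hψ using hdvd
  have hprod : ∏ i ∈ s, φ i = X ^ (∑ i ∈ s, m i) * ∏ i ∈ s, ψ i := by
    calc ∏ i ∈ s, φ i = ∏ i ∈ s, (X ^ m i * ψ i) := Finset.prod_congr rfl fun i _ => hψ i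
      _ = (∏ i ∈ s, (X : PowerSeries ℂ) ^ m i) * ∏ i ∈ s, ψ i := Finset.prod_mul_distrib
      _ = X ^ (∑ i ∈ s, m i) * ∏ i ∈ s, ψ i := by rw [Finset.prod_pow_eq_pow_sum]
  constructor
  · intro n hn
    rw [hprod]
    exact PowerSeries.X_pow_dvd_iff.1 (Dvd.intro _ rfl) n hn
  · rw [hprod]
    have hX := PowerSeries.coeff_X_pow_mul (∏ i ∈ s, ψ i) (∑ i ∈ s, m i) 0
    rw [zero_add] at hX
    rw [hX, PowerSeries.coeff_zero_eq_constantCoeff, map_prod]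
    refine Finset.prod_congr rfl fun i _ => ?_
    have hX2 := PowerSeries.coeff_X_pow_mul (ψ i) (m i) 0
    rw [zero_add] at hX2
    rw [hψ i, hX2, PowerSeries.coeff_zero_eq_constantCoeff]

lemma myDerivProdLin {ι : Type*} [DecidableEq ι] {R : Type*} [CommRing R]
    (s : Finset ι) (g : ι → R) :
    Polynomial.derivative (∏ i ∈ s, (Polynomial.X - Polynomial.C (g i)))
      = ∑ i ∈ s, ∏ l ∈ s.erase i, (Polynomial.X - Polynomial.C (g l)) := by
  induction s using Finset.induction with
  | empty => simp
  | insert a s ha ih =>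
    rw [Finset.prod_insert ha, Polynomial.derivative_mul, ih, Finset.sum_insert ha,
      Finset.erase_insert ha]
    simp only [Polynomial.derivative_sub, Polynomial.derivative_X, Polynomial.derivative_C,
      sub_zero, one_mul]
    rw [Finset.mul_sum]
    congr 1
    refine Finset.sum_congr rfl fun i hi => ?_
    rw [Finset.erase_insert_of_ne (by rintro rfl; exact ha hi),
      Finset.prod_insert (fun h => ha (Finset.mem_of_mem_erase h))]

/-- Key step in the proof of Theorem 3: a root `β_j` of `∂f/∂x` not equal to any root
of `f` leaves the Kuo–Lu tree at a pseudo-ball `B = B(α_k, h)` of finite height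
`h = max_i O(α_i, β_j)`; its leading coefficient `b = coeff_h β_j` is a critical point
but not a root of `F_B`, and `f(β_j(y), y) = C · F_B(b) · y^(q(B)) + ⋯` with
`C · F_B(b) ≠ 0`. -/
theorem stmt_5 (p : ℕ) (hp : 2 ≤ p) (α : Fin p → PowerSeries ℂ)
    (β : Fin (p - 1) → PowerSeries ℂ)
    (hder : Polynomial.derivative (∏ i, (Polynomial.X - Polynomial.C (α i)))
      = (p : Polynomial (PowerSeries ℂ)) * ∏ j, (Polynomial.X - Polynomial.C (β j)))
    (j : Fin (p - 1)) (hβ : ∀ i, β j ≠ α i) :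
    ∃ h : ℕ, Finset.univ.sup (fun i => (α i - β j).order) = (h : ℕ∞) ∧
      (∃ k : Fin p, (α k - β j).order = (h : ℕ∞)) ∧
      ∀ k : Fin p, (α k - β j).order = (h : ℕ∞) →
        ∀ (S : Finset (Fin p)),
          S = (Finset.univ.filter fun i => (h : ℕ∞) ≤ (α i - α k).order) →
        ∀ (F : Polynomial ℂ),
          F = ∏ i ∈ S, (Polynomial.X - Polynomial.C (PowerSeries.coeff h (α i))) →
        ∀ (q : ℕ), q = ∑ i, (min (h : ℕ∞) ((α k - α i).order)).toNat →
        ∀ (b : ℂ), b = PowerSeries.coeff h (β j) →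
        ∀ (C : ℂ),
          C = ∏ i ∈ Sᶜ, PowerSeries.coeff ((α k - α i).order.toNat) (α k - α i) →
          F.derivative.eval b = 0 ∧ F.eval b ≠ 0 ∧
          (∏ i, (β j - α i)).order = (q : ℕ∞) ∧
          PowerSeries.coeff q (∏ i, (β j - α i)) = C * F.eval b := by
  classical
  have hne : ∀ i, α i - β j ≠ 0 := fun i => sub_ne_zero_of_ne (hβ i).symm
  have hfin : ∀ i, (α i - β j).order < ⊤ := fun i =>
    PowerSeries.order_finite_iff_ne_zero.2 (hne i)
  haveI : Nonempty (Fin p) := ⟨⟨0, by omega⟩⟩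
  have hsupfin : (Finset.univ.sup fun i => (α i - β j).order) < ⊤ :=
    (Finset.sup_lt_iff (by simp)).2 fun i _ => hfin i
  obtain ⟨h, hh⟩ : ∃ h : ℕ, (Finset.univ.sup fun i => (α i - β j).order) = (h : ℕ∞) :=
    ⟨_, (ENat.coe_toNat hsupfin.ne).symm⟩
  refine ⟨h, hh, ?_, ?_⟩
  · obtain ⟨k, _, hk⟩ := Finset.exists_mem_eq_sup Finset.univ Finset.univ_nonempty
      (fun i => (α i - β j).order)
    exact ⟨k, by rw [← hk, hh]⟩
  intro k hk S hS F hF q hq b hb C hC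
  -- basic order facts
  have hdsymm : ∀ i : Fin p, (α i - α k).order = (α k - α i).order := fun i => by
    rw [← neg_sub (α k) (α i), myOrderNeg]
  have hSmem : ∀ i, i ∈ S ↔ (h : ℕ∞) ≤ (α k - α i).order := fun i => by
    rw [hS, Finset.mem_filter]
    simp [hdsymm i]
  have hkS : k ∈ S := by
    rw [hSmem, sub_self, PowerSeries.order_zero]
    exact le_top
  have horder_k : (β j - α k).order = (h : ℕ∞) := by
    rw [← neg_sub (α k) (β j), myOrderNeg, hk]
  have hle : ∀ i, (β j - α i).order ≤ (h : ℕ∞) := fun i => by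
    rw [← neg_sub (α i) (β j), myOrderNeg, ← hh]
    exact Finset.le_sup (f := fun i => (α i - β j).order) (Finset.mem_univ i)
  set m : Fin p → ℕ := fun i => (min (h : ℕ∞) ((α k - α i).order)).toNat with hm_def
  have hq' : q = ∑ i, m i := hq
  have hmfin : ∀ i, (min (h : ℕ∞) ((α k - α i).order)) ≠ ⊤ := fun i =>
    (lt_of_le_of_lt (min_le_left _ _) (WithTop.coe_lt_top h)).ne
  have hmc : ∀ i, (m i : ℕ∞) = min (h : ℕ∞) ((α k - α i).order) := fun i =>
    ENat.coe_toNat (hmfin i)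
  have hmS : ∀ i ∈ S, m i = h := fun i hi => by
    have : (m i : ℕ∞) = (h : ℕ∞) := by
      rw [hmc i, min_eq_left ((hSmem i).1 hi)]
    exact_mod_cast this
  have hm_notS : ∀ i ∉ S, (α k - α i).order < (h : ℕ∞) := fun i hi => by
    by_contra hcon
    exact hi ((hSmem i).2 (le_of_not_gt hcon))
  have hmc_notS : ∀ i ∉ S, (m i : ℕ∞) = (α k - α i).order := fun i hi => by
    rw [hmc i, min_eq_right (hm_notS i hi).le]
  -- the order of each β j - α i
  have hsplit : ∀ i : Fin p, β j - α i = (β j - α k) + (α k - α i) := fun i => by ring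
  have horder : ∀ i, (β j - α i).order = (m i : ℕ∞) := by
    intro i
    by_cases hi : i ∈ S
    · apply le_antisymm
      · rw [hmS i hi]; exact hle i
      · rw [hmS i hi, hsplit i]
        refine le_trans ?_ (PowerSeries.min_order_le_order_add _ _)
        rw [horder_k]
        exact le_min le_rfl ((hSmem i).1 hi)
    · have hlt := hm_notS i hi
      rw [hsplit i, PowerSeries.order_add_of_order_ne _ _ (by rw [horder_k]; exact hlt.ne'),
        horder_k, min_eq_right hlt.le, hmc_notS i hi]
  have hm0 : ∀ i, ∀ n < m i, PowerSeries.coeff n (β j - α i) = 0 := fun i n hn =>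
    PowerSeries.coeff_of_lt_order n (by rw [horder i]; exact_mod_cast hn)
  have hlead : ∀ i, PowerSeries.coeff (m i) (β j - α i) ≠ 0 := fun i =>
    (PowerSeries.order_eq_nat.1 (horder i)).1
  -- coefficient values
  have hcS : ∀ i ∈ S, PowerSeries.coeff (m i) (β j - α i)
      = b - PowerSeries.coeff h (α i) := fun i hi => by
    rw [hmS i hi, map_sub, hb]
  have hcSc : ∀ i ∉ S, PowerSeries.coeff (m i) (β j - α i)
      = PowerSeries.coeff ((α k - α i).order.toNat) (α k - α i) := fun i hi => by
    have h1 : PowerSeries.coeff (m i) (β j - α k) = 0 :=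
      PowerSeries.coeff_of_lt_order _ (by
        rw [horder_k, hmc_notS i hi]; exact hm_notS i hi)
    have h2 : m i = (α k - α i).order.toNat := by
      have := hmc_notS i hi
      rw [← this]; simp
    rw [hsplit i, map_add, h1, zero_add, h2]
  have hFeval : F.eval b = ∏ i ∈ S, (b - PowerSeries.coeff h (α i)) := by
    rw [hF, Polynomial.eval_prod]
    simp
  have hFne : F.eval b ≠ 0 := by
    rw [hFeval]
    refine Finset.prod_ne_zero_iff.2 fun i hi => ?_
    rw [← hcS i hi]
    exact hlead i
  have hCne : C ≠ 0 := by
    rw [hC]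
    refine Finset.prod_ne_zero_iff.2 fun i hi => ?_
    rw [← hcSc i (Finset.mem_compl.1 hi)]
    exact hlead i
  obtain ⟨hvan, hcq⟩ := myAux Finset.univ (fun i => β j - α i) m hm0
  have hprod_coeff : PowerSeries.coeff q (∏ i, (β j - α i)) = C * F.eval b := by
    rw [hq', hcq, ← Finset.prod_mul_prod_compl S, Finset.prod_congr rfl hcS,
      Finset.prod_congr rfl (fun i hi => hcSc i (Finset.mem_compl.1 hi)), ← hFeval, ← hC,
      mul_comm]
  have horder_prod : (∏ i, (β j - α i)).order = (q : ℕ∞) := by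
    refine PowerSeries.order_eq_nat.2 ⟨?_, fun n hn => ?_⟩
    · rw [hprod_coeff]; exact mul_ne_zero hCne hFne
    · exact hvan n (by rw [← hq']; exact hn)
  -- derivative identity
  have hderiv_eval : ∑ i, ∏ l ∈ Finset.univ.erase i, (β j - α l) = 0 := by
    have h1 := congrArg (Polynomial.eval (β j)) hder
    rw [myDerivProdLin] at h1
    simp only [Polynomial.eval_finset_sum, Polynomial.eval_prod, Polynomial.eval_sub,
      Polynomial.eval_X, Polynomial.eval_C, Polynomial.eval_mul, Polynomial.eval_natCast] at h1
    rw [Finset.prod_eq_zero (Finset.mem_univ j) (by rw [sub_self]), mul_zero] at h1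
    exact h1
  have hqh : h ≤ q := by
    have h1 : m k ≤ ∑ i, m i :=
      Finset.single_le_sum (fun i _ => Nat.zero_le (m i)) (Finset.mem_univ k)
    rw [hmS k hkS] at h1
    omega
  have herase : ∀ i : Fin p, m i + ∑ l ∈ Finset.univ.erase i, m l = q := fun i => by
    rw [hq', Finset.add_sum_erase _ m (Finset.mem_univ i)]
  have hm_lt_h : ∀ i ∉ S, m i < h := fun i hi => by
    have := hmc_notS i hi
    have h2 := hm_notS i hi
    rw [← this] at h2
    exact_mod_cast h2
  -- coefficient of each summand at q - h
  have hterm_S : ∀ i ∈ S, PowerSeries.coeff (q - h) (∏ l ∈ Finset.univ.erase i, (β j - α l))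
      = C * ∏ l ∈ S.erase i, (b - PowerSeries.coeff h (α l)) := by
    intro i hi
    obtain ⟨_, hc⟩ := myAux (Finset.univ.erase i) (fun l => β j - α l) m hm0
    have hsum_e : ∑ l ∈ Finset.univ.erase i, m l = q - h := by
      have := herase i; rw [hmS i hi] at this; omega
    rw [hsum_e] at hc
    rw [hc]
    have hset : Finset.univ.erase i = (S.erase i) ∪ Sᶜ := by
      ext x
      simp only [Finset.mem_erase, Finset.mem_union, Finset.mem_compl, Finset.mem_univ,
        and_true]
      constructor
      · intro hx
        by_cases hxS : x ∈ S
        · exact Or.inl ⟨hx, hxS⟩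
        · exact Or.inr hxS
      · rintro (⟨hx, _⟩ | hx)
        · exact hx
        · rintro rfl; exact hx hi
    have hdisj : Disjoint (S.erase i) Sᶜ :=
      Disjoint.mono_left (Finset.erase_subset i S) disjoint_compl_right
    rw [hset, Finset.prod_union hdisj,
      Finset.prod_congr rfl (fun l hl => hcS l (Finset.mem_of_mem_erase hl)),
      Finset.prod_congr rfl (fun l hl => hcSc l (Finset.mem_compl.1 hl)), ← hC, mul_comm]
  have hterm_Sc : ∀ i ∉ S,
      PowerSeries.coeff (q - h) (∏ l ∈ Finset.univ.erase i, (β j - α l)) = 0 := by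
    intro i hi
    obtain ⟨hv, _⟩ := myAux (Finset.univ.erase i) (fun l => β j - α l) m hm0
    refine hv _ ?_
    have h1 := herase i
    have h2 := hm_lt_h i hi
    omega
  have hzero := congrArg (PowerSeries.coeff (q - h)) hderiv_eval
  rw [map_sum, map_zero, ← Finset.sum_add_sum_compl S] at hzero
  rw [Finset.sum_congr rfl hterm_S,
    Finset.sum_congr rfl (fun i hi => hterm_Sc i (Finset.mem_compl.1 hi)),
    Finset.sum_const_zero, add_zero, ← Finset.mul_sum] at hzero
  have hFd : F.derivative.eval b = ∑ i ∈ S, ∏ l ∈ S.erase i, (b - PowerSeries.coeff h (α l)) := by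
    rw [hF, myDerivProdLin, Polynomial.eval_finset_sum]
    refine Finset.sum_congr rfl fun i _ => ?_
    rw [Polynomial.eval_prod]
    simp
  refine ⟨?_, hFne, horder_prod, hprod_coeff⟩
  rw [hFd]
  exact (mul_eq_zero.1 hzero).resolve_left hCne
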